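/- With notation as above (f, g conjugate polyhedral functions, W(t) the set of optimal w given t), for each t the set W(t) is the projection of a non-vertical face of epi(g); i.e., W(t) is a reaction set. Conversely, every projection W of a non-vertical face of epi(g) arises as W(t) for some t. -/

import Mathlib

noncomputable section
open Set

abbrev V (n : ℕ) := EuclideanSpace ℝ (Fin n)

/-- A polyhedron: finite intersection of closed half-spaces. -/
def IsPolyhedron {E : Type*} [AddCommGroup E] [Module ℝ E] (P : Set E) : Prop :=
  ∃ (m : ℕ) (L : Fin m → E →ₗ[ℝ] ℝ) (b : Fin m → ℝ), P = {x | ∀ i, L i x ≤ b i}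

/-- Epigraph of an `EReal`-valued function (as a subset of `ℝⁿ × ℝ`). -/
def epiE {n : ℕ} (g : V n → EReal) : Set (V n × ℝ) := {p | g p.1 ≤ (p.2 : EReal)}

/-- `F` is a non-vertical face of `P`: an exposed face, nonempty, whose affine hull
does not contain the vertical direction `(0, 1)`. -/
def NonVerticalFace {n : ℕ} (P F : Set (V n × ℝ)) : Prop :=
  IsExposed ℝ P F ∧ F.Nonempty ∧
    ((0 : V n), (1 : ℝ)) ∉ (affineSpan ℝ F).direction

/-- for every `t`, the argmin set `W(t)` is a reaction set
(the projection of a non-vertical face of `epi g`), and conversely every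
reaction set arises as `W(t)` for some `t`. -/
theorem stmt4 (n : ℕ) (g : V n → EReal)
    (hbot : ∀ w, g w ≠ ⊥) (hproper : ∃ w, g w ≠ ⊤)
    (hpoly : IsPolyhedron (epiE g))
    (f : V n → EReal)
    (hf : ∀ t, f t = ⨅ w : V n, ((inner ℝ t w : ℝ) : EReal) + g w)
    (hatt : ∀ t, ∃ w : V n, f t = ((inner ℝ t w : ℝ) : EReal) + g w)
    (Wt : V n → Set (V n))
    (hW : ∀ t, Wt t = {w | f t = ((inner ℝ t w : ℝ) : EReal) + g w}) :
    (∀ t : V n, ∃ F : Set (V n × ℝ),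
        NonVerticalFace (epiE g) F ∧ Wt t = Prod.fst '' F) ∧
    (∀ W' : Set (V n),
        (∃ F : Set (V n × ℝ), NonVerticalFace (epiE g) F ∧ W' = Prod.fst '' F) →
        ∃ t : V n, W' = Wt t) := by
  -- `f t` is a lower bound for `⟨t,w⟩ + g w`
  have hfle : ∀ t w, f t ≤ ((inner ℝ t w : ℝ) : EReal) + g w := by
    intro t w; rw [hf]; exact iInf_le _ w
  -- key : `f t` is a lower bound over the epigraph
  have key : ∀ t : V n, ∀ p ∈ epiE g, f t ≤ ((inner ℝ t p.1 + p.2 : ℝ) : EReal) := by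
    intro t p hp
    refine (hfle t p.1).trans ?_
    rw [EReal.coe_add]
    exact add_le_add le_rfl (show g p.1 ≤ ((p.2 : ℝ) : EReal) from hp)
  constructor
  · -- Direction 1
    intro t
    obtain ⟨w0, hw0⟩ := hatt t
    have hfbot : f t ≠ ⊥ := by
      rw [hw0]
      simp [EReal.add_eq_bot_iff, hbot w0]
    have hftop : f t ≠ ⊤ := by
      obtain ⟨w1, hw1⟩ := hproper
      intro h
      have h2 := hfle t w1
      rw [h, top_le_iff] at h2
      rw [← EReal.coe_toReal hw1 (hbot w1), ← EReal.coe_add] at h2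
      exact EReal.coe_ne_top _ h2
    set a := (f t).toReal with ha
    have hfa : (a : EReal) = f t := EReal.coe_toReal hftop hfbot
    have hgw0top : g w0 ≠ ⊤ := by
      intro h; rw [h] at hw0
      rw [EReal.coe_add_top] at hw0
      exact hftop hw0
    set r0 := (g w0).toReal with hr0
    have hgw0 : ((r0 : ℝ) : EReal) = g w0 := EReal.coe_toReal hgw0top (hbot w0)
    have hw0' : a = inner ℝ t w0 + r0 := by
      apply EReal.coe_eq_coe_iff.mp
      rw [hfa, EReal.coe_add, hgw0, hw0]
    have hp0 : ((w0, r0) : V n × ℝ) ∈ epiE g := by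
      show g w0 ≤ ((r0 : ℝ) : EReal)
      rw [hgw0]
    have hlow : ∀ p ∈ epiE g, a ≤ inner ℝ t p.1 + p.2 := by
      intro p hp
      exact EReal.coe_le_coe_iff.mp (by rw [hfa]; exact key t p hp)
    refine ⟨{p ∈ epiE g | (inner ℝ t p.1 : ℝ) + p.2 = a}, ⟨?_, ?_, ?_⟩, ?_⟩
    · -- exposed
      intro _
      refine ⟨-((innerSL ℝ t).comp (ContinuousLinearMap.fst ℝ _ _) +
        ContinuousLinearMap.snd ℝ _ _), ?_⟩
      have hlval : ∀ p : V n × ℝ,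
          (-((innerSL ℝ t).comp (ContinuousLinearMap.fst ℝ _ _) +
            ContinuousLinearMap.snd ℝ _ _) : (V n × ℝ) →L[ℝ] ℝ) p
            = -((inner ℝ t p.1 : ℝ) + p.2) := by
        intro p
        simp only [ContinuousLinearMap.neg_apply, ContinuousLinearMap.add_apply,
          ContinuousLinearMap.comp_apply, ContinuousLinearMap.coe_fst',
          ContinuousLinearMap.coe_snd', innerSL_apply_apply]
      ext p
      simp only [mem_setOf_eq, hlval]
      constructor
      · rintro ⟨hp, hpe⟩
        refine ⟨hp, ?_⟩
        intro y hy
        have := hlow y hy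
        linarith
      · rintro ⟨hp, hmax⟩
        refine ⟨hp, ?_⟩
        have h1 := hmax (w0, r0) hp0
        have h2 := hlow p hp
        have : (inner ℝ t w0 : ℝ) + r0 = a := hw0'.symm
        linarith
    · exact ⟨(w0, r0), hp0, hw0'.symm⟩
    · -- nonvertical
      intro hmem
      rw [direction_affineSpan, vectorSpan_def] at hmem
      set L : (V n × ℝ) →L[ℝ] ℝ :=
        (innerSL ℝ t).comp (ContinuousLinearMap.fst ℝ _ _) + ContinuousLinearMap.snd ℝ _ _ with hL
      have hLval : ∀ p : V n × ℝ, L p = (inner ℝ t p.1 : ℝ) + p.2 := by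
        intro p
        simp only [hL, ContinuousLinearMap.add_apply, ContinuousLinearMap.comp_apply,
          ContinuousLinearMap.coe_fst', ContinuousLinearMap.coe_snd', innerSL_apply_apply]
      have hker : Submodule.span ℝ
          ({p ∈ epiE g | (inner ℝ t p.1 : ℝ) + p.2 = a} -ᵥ
            {p ∈ epiE g | (inner ℝ t p.1 : ℝ) + p.2 = a}) ≤
          LinearMap.ker (L : (V n × ℝ) →ₗ[ℝ] ℝ) := by
        rw [Submodule.span_le]
        rintro v hv
        rw [Set.mem_vsub] at hv
        obtain ⟨x, hx, y, hy, rfl⟩ := hv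
        show L (x -ᵥ y) = 0
        rw [vsub_eq_sub, map_sub, hLval, hLval, hx.2, hy.2, sub_self]
      have h01 := hker hmem
      have : L ((0 : V n), (1 : ℝ)) = 0 := h01
      rw [hLval] at this
      simp at this
    · -- projection
      rw [hW t]
      ext w
      simp only [mem_setOf_eq, Set.mem_image]
      constructor
      · intro hw
        have hgwtop : g w ≠ ⊤ := by
          intro h; rw [h, EReal.coe_add_top] at hw; exact hftop hw
        refine ⟨(w, (g w).toReal), ⟨?_, ?_⟩, rfl⟩
        · show g w ≤ (((g w).toReal : ℝ) : EReal)
          rw [EReal.coe_toReal hgwtop (hbot w)]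
        · apply EReal.coe_eq_coe_iff.mp
          rw [hfa, EReal.coe_add, EReal.coe_toReal hgwtop (hbot w), hw]
      · rintro ⟨p, ⟨hp, hpe⟩, rfl⟩
        have h1 : f t ≤ ((inner ℝ t p.1 : ℝ) : EReal) + g p.1 := hfle t p.1
        have h2 : ((inner ℝ t p.1 : ℝ) : EReal) + g p.1 ≤ ((inner ℝ t p.1 + p.2 : ℝ) : EReal) := by
          rw [EReal.coe_add]; exact add_le_add le_rfl (show g p.1 ≤ ((p.2 : ℝ) : EReal) from hp)
        have h3 : ((inner ℝ t p.1 + p.2 : ℝ) : EReal) = f t := by rw [hpe, hfa]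
        exact le_antisymm h1 (h3 ▸ h2)
  · -- Direction 2
    rintro W' ⟨F, ⟨hexp, hne, hnv⟩, rfl⟩
    obtain ⟨l, hl⟩ := hexp hne
    set c : ℝ := l ((0 : V n), (1 : ℝ)) with hc
    obtain ⟨x0, hx0⟩ := hne
    have hx0' : x0 ∈ epiE g ∧ ∀ y ∈ epiE g, l y ≤ l x0 := by rwa [hl] at hx0
    have hup : ∀ p ∈ epiE g, ∀ d : ℝ, 0 ≤ d → ((p.1, p.2 + d) : V n × ℝ) ∈ epiE g := by
      intro p hp d hd
      refine le_trans (show g p.1 ≤ ((p.2 : ℝ) : EReal) from hp) ?_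
      exact_mod_cast (by linarith : p.2 ≤ p.2 + d)
    have hl_shift : ∀ (p : V n × ℝ) (d : ℝ), l (p.1, p.2 + d) = l p + d * c := by
      intro p d
      have hpe : ((p.1, p.2 + d) : V n × ℝ) = p + d • (((0 : V n), (1 : ℝ)) : V n × ℝ) := by
        apply Prod.ext <;> simp
      rw [hpe, map_add, map_smul, smul_eq_mul, hc]
    have hc0 : c ≤ 0 := by
      have h1 := hx0'.2 (x0.1, x0.2 + 1) (hup x0 hx0'.1 1 zero_le_one)
      rw [hl_shift] at h1
      linarith
    have hcne : c ≠ 0 := by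
      intro h0
      apply hnv
      have hx1 : ((x0.1, x0.2 + 1) : V n × ℝ) ∈ F := by
        rw [hl]
        refine ⟨hup x0 hx0'.1 1 zero_le_one, ?_⟩
        intro y hy
        rw [hl_shift, h0, mul_zero, add_zero]
        exact hx0'.2 y hy
      have hd := AffineSubspace.vsub_mem_direction (mem_affineSpan ℝ hx1) (mem_affineSpan ℝ hx0)
      have he : ((x0.1, x0.2 + 1) : V n × ℝ) -ᵥ x0 = (((0 : V n), (1 : ℝ)) : V n × ℝ) := by
        rw [vsub_eq_sub]; apply Prod.ext <;> simp
      rwa [he] at hd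
    have hcneg : c < 0 := lt_of_le_of_ne hc0 hcne
    have hinvneg : c⁻¹ ≤ 0 := le_of_lt (inv_lt_zero.mpr hcneg)
    set t : V n := c⁻¹ • (InnerProductSpace.toDual ℝ (V n)).symm
      (l.comp (ContinuousLinearMap.inl ℝ (V n) ℝ)) with htdef
    have ht : ∀ p : V n × ℝ, (inner ℝ t p.1 : ℝ) + p.2 = c⁻¹ * l p := by
      intro p
      have h1 : (inner ℝ ((InnerProductSpace.toDual ℝ (V n)).symm
          (l.comp (ContinuousLinearMap.inl ℝ (V n) ℝ))) p.1 : ℝ) = l (p.1, 0) := by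
        rw [InnerProductSpace.toDual_symm_apply]
        rfl
      have h2 : l p = l (p.1, 0) + p.2 * c := by
        have := hl_shift (p.1, 0) p.2
        rwa [zero_add] at this
      rw [htdef, real_inner_smul_left, h1, h2]
      field_simp
    have flip : ∀ u v : ℝ, u ≤ v ↔ c⁻¹ * v ≤ c⁻¹ * u := by
      intro u v
      constructor
      · intro h; exact mul_le_mul_of_nonpos_left h hinvneg
      · intro h
        have := mul_le_mul_of_nonpos_left h hc0
        rwa [← mul_assoc, ← mul_assoc, mul_inv_cancel₀ hcne, one_mul, one_mul] at this
    have hmin : ∀ p : V n × ℝ, p ∈ F ↔ p ∈ epiE g ∧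
        ∀ y ∈ epiE g, (inner ℝ t p.1 : ℝ) + p.2 ≤ (inner ℝ t y.1 : ℝ) + y.2 := by
      intro p
      rw [hl]
      simp only [mem_setOf_eq]
      constructor
      · rintro ⟨hp, hmax⟩
        refine ⟨hp, fun y hy => ?_⟩
        rw [ht, ht]
        exact (flip _ _).mp (hmax y hy)
      · rintro ⟨hp, hm⟩
        refine ⟨hp, fun y hy => ?_⟩
        have := hm y hy
        rw [ht, ht] at this
        exact (flip _ _).mpr this
    refine ⟨t, ?_⟩
    have hx0m := (hmin x0).mp hx0
    set m : ℝ := (inner ℝ t x0.1 : ℝ) + x0.2 with hm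
    -- f t = m
    have hfm : f t = (m : EReal) := by
      apply le_antisymm
      · refine (hfle t x0.1).trans ?_
        rw [hm, EReal.coe_add]
        exact add_le_add le_rfl (show g x0.1 ≤ ((x0.2 : ℝ) : EReal) from hx0m.1)
      · rw [hf t]
        apply le_iInf
        intro w
        by_cases hgw : g w = ⊤
        · rw [hgw, EReal.coe_add_top]; exact le_top
        · have hgr : (((g w).toReal : ℝ) : EReal) = g w := EReal.coe_toReal hgw (hbot w)
          have hwmem : ((w, (g w).toReal) : V n × ℝ) ∈ epiE g := by
            show g w ≤ (((g w).toReal : ℝ) : EReal)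
            rw [hgr]
          have := hx0m.2 (w, (g w).toReal) hwmem
          rw [← hgr, ← EReal.coe_add]
          exact_mod_cast this
    rw [hW t]
    ext w
    simp only [Set.mem_image, mem_setOf_eq]
    constructor
    · rintro ⟨p, hpF, rfl⟩
      have hpm := (hmin p).mp hpF
      have hpval : (inner ℝ t p.1 : ℝ) + p.2 = m := by
        have h1 := hpm.2 x0 hx0m.1
        have h2 := hx0m.2 p hpm.1
        linarith
      have h1 : f t ≤ ((inner ℝ t p.1 : ℝ) : EReal) + g p.1 := hfle t p.1
      have h2 : ((inner ℝ t p.1 : ℝ) : EReal) + g p.1 ≤ ((inner ℝ t p.1 + p.2 : ℝ) : EReal) := by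
        rw [EReal.coe_add]; exact add_le_add le_rfl (show g p.1 ≤ ((p.2 : ℝ) : EReal) from hpm.1)
      have h3 : ((inner ℝ t p.1 + p.2 : ℝ) : EReal) = f t := by rw [hpval, hfm]
      exact le_antisymm h1 (h3 ▸ h2)
    · intro hw
      have hgwtop : g w ≠ ⊤ := by
        intro h
        rw [h, EReal.coe_add_top, hfm] at hw
        exact EReal.coe_ne_top _ hw
      have hgr : (((g w).toReal : ℝ) : EReal) = g w := EReal.coe_toReal hgwtop (hbot w)
      refine ⟨(w, (g w).toReal), ?_, rfl⟩
      rw [hmin]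
      refine ⟨?_, ?_⟩
      · show g w ≤ (((g w).toReal : ℝ) : EReal)
        rw [hgr]
      · intro y hy
        have hval : (inner ℝ t w : ℝ) + (g w).toReal = m := by
          apply EReal.coe_eq_coe_iff.mp
          rw [EReal.coe_add, hgr, ← hw, hfm]
        have h1 : (m : EReal) ≤ ((inner ℝ t y.1 + y.2 : ℝ) : EReal) := by
          rw [← hfm]; exact key t y hy
        have := EReal.coe_le_coe_iff.mp h1
        simp only []
        linarith
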